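/- Let A and B be n×n complex Hermitian matrices and t a real number. Then the first-order Trotter product formula satisfies ‖ exp(−i·t·(A + B)) − exp(−i·t·A) · exp(−i·t·B) ‖ ≤ (t²/2) · ‖ A·B − B·A ‖, where exp is the matrix exponential and ‖·‖ is the operator (spectral) norm on n×n complex matrices. (This is the first-order instance of Lemma A.2 of the paper, the Trotter error bound with commutator scaling ‖𝒜(t)‖ = O(α_comm · t²), which controls the per-step Hamiltonian-simulation residual in Theorem 2.) -/

import Mathlib

open scoped Matrix

/-- The operator (spectral) norm of a square complex matrix, i.e. the norm of its action on
Euclidean space. -/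
noncomputable def opNorm {n : ℕ} (M : Matrix (Fin n) (Fin n) ℂ) : ℝ :=
  ‖Matrix.toEuclideanCLM (𝕜 := ℂ) M‖

section TrotterAux

open scoped Matrix.Norms.L2Operator
open NormedSpace Complex

variable {n : ℕ}

private noncomputable def instNAQ : NormedAlgebra ℚ (Matrix (Fin n) (Fin n) ℂ) :=
  NormedAlgebra.restrictScalars ℚ ℂ _

attribute [local instance] instNAQ

private lemma expD (x : Matrix (Fin n) (Fin n) ℂ) (s : ℝ) :
    HasDerivAt (fun u : ℝ => exp (u • x)) (exp (s • x) * x) s := by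
  exact hasDerivAt_exp_smul_const x s

private lemma expD' (x : Matrix (Fin n) (Fin n) ℂ) (s : ℝ) :
    HasDerivAt (fun u : ℝ => exp (u • x)) (x * exp (s • x)) s := by
  exact hasDerivAt_exp_smul_const' x s

private lemma expU {a : Matrix (Fin n) (Fin n) ℂ} (ha : IsSelfAdjoint a) (s : ℝ) :
    exp (s • ((-I : ℂ) • a)) ∈ unitary (Matrix (Fin n) (Fin n) ℂ) := by
  apply exp_mem_unitary_of_mem_skewAdjoint
  rw [skewAdjoint.mem_iff]
  simp [star_smul, ha.star_eq, smul_smul]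

private lemma normConj {u v m : Matrix (Fin n) (Fin n) ℂ}
    (hu : u ∈ unitary (Matrix (Fin n) (Fin n) ℂ))
    (hv : v ∈ unitary (Matrix (Fin n) (Fin n) ℂ)) :
    ‖u * (m * v)‖ = ‖m‖ := by
  rw [CStarRing.norm_mem_unitary_mul _ hu, CStarRing.norm_mul_mem_unitary m hv]

private lemma commBound {a : Matrix (Fin n) (Fin n) ℂ} (ha : IsSelfAdjoint a)
    (y : Matrix (Fin n) (Fin n) ℂ) (s : ℝ) :
    ‖exp (s • ((-I : ℂ) • a)) * y - y * exp (s • ((-I : ℂ) • a))‖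
      ≤ |s| * ‖((-I : ℂ) • a) * y - y * ((-I : ℂ) • a)‖ := by
  set x : Matrix (Fin n) (Fin n) ℂ := (-I : ℂ) • a with hxdef
  set f : ℝ → Matrix (Fin n) (Fin n) ℂ :=
    fun u => exp (u • x) * (y * exp ((s - u) • x)) with hfdef
  have hd : ∀ u : ℝ, HasDerivAt f
      (exp (u • x) * ((x * y - y * x) * exp ((s - u) • x))) u := by
    intro u
    have h2 : HasDerivAt (fun u : ℝ => exp ((s - u) • x))
        ((-1 : ℝ) • (x * exp ((s - u) • x))) u := by
      have hh : HasDerivAt (fun u : ℝ => s - u) (-1) u :=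
        (hasDerivAt_id u).const_sub s
      exact HasDerivAt.scomp (x := u) (expD' x (s - u)) hh
    have := (expD x u).mul (HasDerivAt.const_mul y h2)
    refine this.congr_deriv ?_
    rw [neg_one_smul]
    noncomm_ring
  have key := Convex.norm_image_sub_le_of_norm_hasDerivWithin_le
    (f' := fun u => NormedSpace.exp (u • x) * ((x * y - y * x) * NormedSpace.exp ((s - u) • x)))
    (fun u _ => (hd u).hasDerivWithinAt)
    (fun u _ => le_of_eq (normConj (expU ha u) (expU ha (s - u))))
    convex_univ (Set.mem_univ (0 : ℝ)) (Set.mem_univ s)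
  have hf0 : f 0 = y * exp (s • x) := by simp [hfdef]
  have hfs : f s = exp (s • x) * y := by simp [hfdef]
  rw [hf0, hfs] at key
  simpa [mul_comm, Real.norm_eq_abs] using key

private lemma keyLe {a b : Matrix (Fin n) (Fin n) ℂ} (ha : IsSelfAdjoint a)
    (hb : IsSelfAdjoint b) {t : ℝ} (ht : 0 ≤ t) :
    ‖exp ((-(I * (t : ℂ))) • (a + b)) -
        exp ((-(I * (t : ℂ))) • a) * exp ((-(I * (t : ℂ))) • b)‖
      ≤ t ^ 2 / 2 * ‖a * b - b * a‖ := by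
  have hsm : ∀ (s : ℝ) (m : Matrix (Fin n) (Fin n) ℂ),
      (-(I * (s : ℂ))) • m = s • ((-I : ℂ) • m) := by
    intro s m
    rw [← smul_assoc, Complex.real_smul]
    congr 1
    ring
  rw [hsm t (a + b), hsm t a, hsm t b]
  set x : Matrix (Fin n) (Fin n) ℂ := (-I : ℂ) • a with hxdef
  set y : Matrix (Fin n) (Fin n) ℂ := (-I : ℂ) • b with hydef
  have hxy : (-I : ℂ) • (a + b) = x + y := smul_add _ _ _
  rw [hxy]
  -- unitarity
  have hux : ∀ s : ℝ, exp (s • x) ∈ unitary (Matrix (Fin n) (Fin n) ℂ) := expU ha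
  have huy : ∀ s : ℝ, exp (s • y) ∈ unitary (Matrix (Fin n) (Fin n) ℂ) := expU hb
  have huz : ∀ s : ℝ, exp (s • (x + y)) ∈ unitary (Matrix (Fin n) (Fin n) ℂ) := by
    intro s; rw [← hxy]; exact expU (ha.add hb) s
  have hun : ∀ s : ℝ, exp (s • (-(x + y))) ∈ unitary (Matrix (Fin n) (Fin n) ℂ) := by
    intro s
    have h : -(x + y) = (-I : ℂ) • (-(a + b)) := by rw [smul_neg, hxy]
    rw [h]; exact expU (ha.add hb).neg s
  set W : ℝ → Matrix (Fin n) (Fin n) ℂ :=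
    fun s => exp (s • (-(x + y))) * (exp (s • x) * exp (s • y)) with hWdef
  set W' : ℝ → Matrix (Fin n) (Fin n) ℂ :=
    fun s => exp (s • (-(x + y))) *
      ((exp (s • x) * y - y * exp (s • x)) * exp (s • y)) with hW'def
  have hW : ∀ s : ℝ, HasDerivAt W (W' s) s := by
    intro s
    have h := (expD (-(x + y)) s).mul ((expD x s).mul (expD y s))
    refine h.congr_deriv ?_
    have hcx : exp (s • x) * x = x * exp (s • x) :=
      (((Commute.refl x).smul_left s).exp_left).eq
    have hcy : exp (s • y) * y = y * exp (s • y) :=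
      (((Commute.refl y).smul_left s).exp_left).eq
    simp only [hW'def, Pi.mul_apply]
    rw [hcx, hcy]
    noncomm_ring
  have hc : ∀ m : Matrix (Fin n) (Fin n) ℂ, Continuous fun s : ℝ => exp (s • m) :=
    fun m => exp_continuous.comp (continuous_id.smul continuous_const)
  have hW'c : Continuous W' :=
    (hc _).mul ((((hc x).mul continuous_const).sub (continuous_const.mul (hc x))).mul (hc y))
  have hint : ∫ s in (0:ℝ)..t, W' s = W t - W 0 :=
    intervalIntegral.integral_eq_sub_of_hasDerivAt (fun s _ => hW s)
      (hW'c.intervalIntegrable 0 t)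
  have hW0 : W 0 = 1 := by simp [hWdef]
  set K : ℝ := ‖x * y - y * x‖ with hKdef
  have hbound : ∀ s : ℝ, ‖W' s‖ ≤ |s| * K := by
    intro s
    rw [hW'def]
    calc ‖exp (s • (-(x+y))) * ((exp (s•x) * y - y * exp (s•x)) * exp (s•y))‖
        = ‖exp (s•x) * y - y * exp (s•x)‖ := normConj (hun s) (huy s)
      _ ≤ |s| * K := commBound ha y s
  have hmain : ‖W t - 1‖ ≤ t ^ 2 / 2 * K := by
    rw [← hW0, ← hint]
    calc ‖∫ s in (0:ℝ)..t, W' s‖ ≤ |∫ s in (0:ℝ)..t, |s| * K| :=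
          le_trans (intervalIntegral.norm_integral_le_of_norm_le ht
            (Filter.Eventually.of_forall fun s _ => hbound s)
            ((_root_.continuous_abs.mul continuous_const).intervalIntegrable 0 t)) (le_abs_self _)
      _ = t ^ 2 / 2 * K := by
          rw [intervalIntegral.integral_congr (g := fun s : ℝ => s * K)
            (fun s hs => by
              have h0 : (0:ℝ) ≤ s := by
                rcases Set.mem_uIcc.mp hs with h | h
                · exact h.1
                · linarith [h.1, h.2]
              rw [_root_.abs_of_nonneg h0]),
            intervalIntegral.integral_mul_const, integral_id]
          have hK0 : (0:ℝ) ≤ K := norm_nonneg _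
          rw [_root_.abs_of_nonneg (mul_nonneg (by nlinarith [sq_nonneg t] : (0:ℝ) ≤ (t^2 - 0^2)/2) hK0)]
          ring
  have hfac : exp (t • (x + y)) - exp (t • x) * exp (t • y)
      = exp (t • (x + y)) * (1 - W t) := by
    rw [mul_sub, mul_one]
    congr 1
    rw [hWdef]
    show exp (t • x) * exp (t • y)
      = exp (t • (x + y)) * (exp (t • (-(x + y))) * (exp (t • x) * exp (t • y)))
    rw [smul_neg, ← mul_assoc, ← exp_add_of_commute (Commute.refl _).neg_right,
      add_neg_cancel, NormedSpace.exp_zero, one_mul]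
  have hK : K = ‖a * b - b * a‖ := by
    have h : x * y - y * x = (-1 : ℂ) • (a * b - b * a) := by
      rw [hxdef, hydef, smul_mul_assoc, smul_mul_assoc, mul_smul_comm, mul_smul_comm,
        smul_smul, smul_smul, smul_sub]
      norm_num
    rw [hKdef, h, norm_smul]
    simp
  calc ‖exp (t • (x + y)) - exp (t • x) * exp (t • y)‖
      = ‖1 - W t‖ := by rw [hfac, CStarRing.norm_mem_unitary_mul _ (huz t)]
    _ = ‖W t - 1‖ := norm_sub_rev _ _
    _ ≤ t ^ 2 / 2 * K := hmain
    _ = t ^ 2 / 2 * ‖a * b - b * a‖ := by rw [hK]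

private lemma keyAll {a b : Matrix (Fin n) (Fin n) ℂ} (ha : IsSelfAdjoint a)
    (hb : IsSelfAdjoint b) (t : ℝ) :
    ‖exp ((-(I * (t : ℂ))) • (a + b)) -
        exp ((-(I * (t : ℂ))) • a) * exp ((-(I * (t : ℂ))) • b)‖
      ≤ t ^ 2 / 2 * ‖a * b - b * a‖ := by
  rcases le_or_gt 0 t with ht | ht
  · exact keyLe ha hb ht
  · have h := keyLe hb ha (t := -t) (by linarith : (0:ℝ) ≤ -t)
    rw [add_comm b a, norm_sub_rev (b * a)] at h
    have ht2 : (-t) ^ 2 = t ^ 2 := by ring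
    rw [ht2] at h
    have hsm : ∀ m : Matrix (Fin n) (Fin n) ℂ, IsSelfAdjoint m →
        star ((-(I * (t : ℂ))) • m) = (-(I * ((-t : ℝ) : ℂ))) • m := by
      intro m hm
      rw [star_smul, hm.star_eq]
      congr 1
      simp only [star_neg, star_mul', Complex.star_def, Complex.conj_I, Complex.conj_ofReal,
        Complex.ofReal_neg]
      ring
    have hstar : star (exp ((-(I * (t : ℂ))) • (a + b)) -
        exp ((-(I * (t : ℂ))) • a) * exp ((-(I * (t : ℂ))) • b))
        = exp ((-(I * ((-t : ℝ) : ℂ))) • (a + b)) -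
          exp ((-(I * ((-t : ℝ) : ℂ))) • b) * exp ((-(I * ((-t : ℝ) : ℂ))) • a) := by
      rw [star_sub, star_mul, star_exp, star_exp, star_exp, hsm _ (ha.add hb), hsm _ ha,
        hsm _ hb]
    rw [← hstar] at h
    have hn : ‖star (exp ((-(I * (t : ℂ))) • (a + b)) -
        exp ((-(I * (t : ℂ))) • a) * exp ((-(I * (t : ℂ))) • b))‖
        = ‖exp ((-(I * (t : ℂ))) • (a + b)) -
        exp ((-(I * (t : ℂ))) • a) * exp ((-(I * (t : ℂ))) • b)‖ :=
      @norm_star _ _ _ CStarRing.to_normedStarGroup _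
    rwa [hn] at h


private lemma keyFinal (n : ℕ) (A B : Matrix (Fin n) (Fin n) ℂ)
    (hA : A.IsHermitian) (hB : B.IsHermitian) (t : ℝ) :
    opNorm (NormedSpace.exp ((-(Complex.I * (t : ℂ))) • (A + B)) -
        NormedSpace.exp ((-(Complex.I * (t : ℂ))) • A) *
          NormedSpace.exp ((-(Complex.I * (t : ℂ))) • B))
      ≤ t^2/2 * opNorm (A * B - B * A) :=
  keyAll hA.isSelfAdjoint hB.isSelfAdjoint t

end TrotterAux

/-- The first-order instance of Lemma A.2 of the paper (Trotter error bound with commutator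
scaling): for Hermitian `A`, `B` and real `t`,
`‖exp(−it(A+B)) − exp(−itA)·exp(−itB)‖ ≤ (t²/2)·‖AB − BA‖` in the operator norm. -/
theorem stmt15 (n : ℕ) (A B : Matrix (Fin n) (Fin n) ℂ)
    (hA : A.IsHermitian) (hB : B.IsHermitian) (t : ℝ) :
    opNorm (NormedSpace.exp ((-(Complex.I * (t : ℂ))) • (A + B)) -
        NormedSpace.exp ((-(Complex.I * (t : ℂ))) • A) *
          NormedSpace.exp ((-(Complex.I * (t : ℂ))) • B))
      ≤ t^2/2 * opNorm (A * B - B * A) := by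
  exact keyFinal n A B hA hB t
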